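/- Fix E ∈ ℂ with E ≠ 0. For r sufficiently large, the equation σ²(2 − σ/r)(2 + σ) + 2|E|²/r = 0 has a pair of complex conjugate solutions σ(r) satisfying σ(r) = ± i |E|/√(2r) + O(1/r); equivalently, the dispersion polynomial has two complex conjugate roots τ = r ± i (|E|/√2) √r + O(1) when ζ = −r − r² and |ξ| = r. -/

import Mathlib

open Polynomial in
lemma quartic_root_near (c₃ c₂ c₀ s : ℂ) :
    ∃ x : ℂ, x^4 + c₃*x^3 + c₂*x^2 + c₀ = 0 ∧
      (‖(s - x)‖)^4 ≤ ‖(s^4 + c₃*s^3 + c₂*s^2 + c₀)‖ := by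
  set p : ℂ[X] := X^4 + C c₃*X^3 + C c₂*X^2 + C c₀ with hp
  have hm : p.Monic := by unfold p; monicity!
  have hdeg : p.natDegree = 4 := by unfold p; compute_degree!
  have hsp : p.Splits := IsAlgClosed.splits p
  have hcard : p.roots.card = 4 := by
    rw [Polynomial.splits_iff_card_roots.mp hsp, hdeg]
  have hfact : p = (p.roots.map fun a => X - C a).prod :=
    hsp.eq_prod_roots_of_monic hm
  obtain ⟨l, hl⟩ := Quotient.exists_rep p.roots
  have hlen : l.length = 4 := by
    have := hcard; rw [← hl] at this; simpa using this
  match l, hlen with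
  | [a, b, c, d], _ =>
  have hroots : p.roots = {a, b, c, d} := by
    rw [← hl]; rfl
  have heval : p.eval s = (s-a)*(s-b)*(s-c)*(s-d) := by
    conv_lhs => rw [hfact]
    rw [hroots]
    simp [Polynomial.eval_multiset_prod]
    ring
  have habs : ‖(p.eval s)‖ =
      ‖(s-a)‖ * ‖(s-b)‖ * ‖(s-c)‖ * ‖(s-d)‖ := by
    rw [heval]; simp [norm_mul]
  -- min selection
  set u1 := ‖(s-a)‖; set u2 := ‖(s-b)‖
  set u3 := ‖(s-c)‖; set u4 := ‖(s-d)‖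
  have h1 : 0 ≤ u1 := norm_nonneg _
  have h2 : 0 ≤ u2 := norm_nonneg _
  have h3 : 0 ≤ u3 := norm_nonneg _
  have h4 : 0 ≤ u4 := norm_nonneg _
  set m := min (min u1 u2) (min u3 u4) with hmdef
  have hm0 : 0 ≤ m := le_min (le_min h1 h2) (le_min h3 h4)
  have hmu1 : m ≤ u1 := le_trans (min_le_left _ _) (min_le_left _ _)
  have hmu2 : m ≤ u2 := le_trans (min_le_left _ _) (min_le_right _ _)
  have hmu3 : m ≤ u3 := le_trans (min_le_right _ _) (min_le_left _ _)
  have hmu4 : m ≤ u4 := le_trans (min_le_right _ _) (min_le_right _ _)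
  have hm4 : m^4 ≤ ‖(p.eval s)‖ := by
    rw [habs]
    nlinarith [mul_le_mul hmu1 hmu2 hm0 h1, mul_le_mul hmu3 hmu4 hm0 h3,
      mul_nonneg hm0 hm0, mul_nonneg (mul_nonneg h1 h2) hm0, mul_le_mul_of_nonneg_left hmu4 (mul_nonneg (mul_nonneg h1 h2) h3)]
  have hevs : p.eval s = s^4 + c₃*s^3 + c₂*s^2 + c₀ := by simp [hp]
  have hroot : ∀ x ∈ p.roots, x^4 + c₃*x^3 + c₂*x^2 + c₀ = 0 := by
    intro x hx
    have := Polynomial.isRoot_of_mem_roots hx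
    simpa [hp, Polynomial.IsRoot] using this
  have hma : a ∈ p.roots := by rw [hroots]; simp
  have hmb : b ∈ p.roots := by rw [hroots]; simp
  have hmc : c ∈ p.roots := by rw [hroots]; simp
  have hmd : d ∈ p.roots := by rw [hroots]; simp
  rw [hevs] at hm4
  have hcases : m = u1 ∨ m = u2 ∨ m = u3 ∨ m = u4 := by
    rcases min_cases u1 u2 with ⟨e12, _⟩ | ⟨e12, _⟩ <;>
    rcases min_cases u3 u4 with ⟨e34, _⟩ | ⟨e34, _⟩ <;>
    rcases min_cases (min u1 u2) (min u3 u4) with ⟨e, _⟩ | ⟨e, _⟩ <;>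
      rw [hmdef, e] <;> simp [e12, e34]
  rcases hcases with h | h | h | h
  · exact ⟨a, hroot a hma, by show u1^4 ≤ _; rw [← h]; exact hm4⟩
  · exact ⟨b, hroot b hmb, by show u2^4 ≤ _; rw [← h]; exact hm4⟩
  · exact ⟨c, hroot c hmc, by show u3^4 ≤ _; rw [← h]; exact hm4⟩
  · exact ⟨d, hroot d hmd, by show u4^4 ≤ _; rw [← h]; exact hm4⟩


set_option maxHeartbeats 2000000 in
/-- for `r` large the rescaled dispersion equation has a pair of
complex conjugate roots `σ(r) = ± i|E|/√(2r) + O(1/r)`; equivalently the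
dispersion polynomial has complex conjugate roots
`τ = r ± i (|E|/√2)√r + O(1)`. -/
theorem stmt4 (E : ℂ) (hE : E ≠ 0) :
    ∃ C > (0 : ℝ), ∃ R > (0 : ℝ), ∀ r : ℝ, R ≤ r →
      ∃ σ : ℂ,
        σ ^ 2 * (2 - σ / (r : ℂ)) * (2 + σ) + 2 * ((‖E‖ : ℝ) : ℂ) ^ 2 / (r : ℂ) = 0 ∧
        (starRingEnd ℂ σ) ^ 2 * (2 - starRingEnd ℂ σ / (r : ℂ)) * (2 + starRingEnd ℂ σ) +
            2 * ((‖E‖ : ℝ) : ℂ) ^ 2 / (r : ℂ) = 0 ∧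
        ‖(σ - Complex.I * ((‖E‖ / Real.sqrt (2 * r) : ℝ) : ℂ))‖ ≤ C / r ∧
        ((r : ℂ) ^ 2 - ((r : ℂ) * (1 + σ)) ^ 2) *
            ((r : ℂ) ^ 4 - ((r : ℂ) * (1 + σ) + (-(r : ℂ) - (r : ℂ) ^ 2)) ^ 2) -
          2 * ((‖E‖ : ℝ) : ℂ) ^ 2 * (r : ℂ) ^ 4 = 0 ∧
        ‖((r : ℂ) * (1 + σ) -
            ((r : ℂ) + Complex.I * ((‖E‖ / Real.sqrt 2 * Real.sqrt r : ℝ) : ℂ)))‖ ≤ C := by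
  set a' := ‖E‖ with ha'def
  have ha' : 0 < a' := norm_pos_iff.mpr hE
  refine ⟨4*a'^2, by positivity, 2 + 8*a'^2 + 73728*a'^6, by positivity, ?_⟩
  intro r hr
  have ha2 : (0:ℝ) ≤ a'^2 := by positivity
  have ha6 : (0:ℝ) ≤ a'^6 := by positivity
  have hr2 : (2:ℝ) ≤ r := by nlinarith
  have hr0 : (0:ℝ) < r := by linarith
  have hrne : ((r:ℝ):ℂ) ≠ 0 := by
    simpa using Complex.ofReal_ne_zero.mpr hr0.ne'
  set u := Real.sqrt (2*r) with hudef
  have hu0 : 0 < u := Real.sqrt_pos.mpr (by linarith)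
  have hu2 : u^2 = 2*r := Real.sq_sqrt (by linarith)
  have hu_lb : 384*a'^3 ≤ u := by
    have h1 : 384*a'^3 = Real.sqrt ((384*a'^3)^2) := (Real.sqrt_sq (by positivity)).symm
    rw [h1, hudef]
    exact Real.sqrt_le_sqrt (by nlinarith)
  have hu_lb2 : 4*a' ≤ u := by
    have h1 : 4*a' = Real.sqrt ((4*a')^2) := (Real.sqrt_sq (by positivity)).symm
    rw [h1, hudef]
    exact Real.sqrt_le_sqrt (by nlinarith)
  set b := a'/u with hbdef
  have hb0 : 0 < b := div_pos ha' hu0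
  have hb2 : b^2*(2*r) = a'^2 := by
    rw [hbdef, div_pow, hu2]
    field_simp
  have hb14 : b ≤ 1/4 := by
    rw [hbdef, div_le_div_iff₀ hu0 (by norm_num)]
    linarith
  set β : ℂ := ((b:ℝ):ℂ) with hβdef
  have hβabs : ‖β‖ = b := by
    rw [hβdef, Complex.norm_real, Real.norm_eq_abs, abs_of_pos hb0]
  have hb2C : 4*(r:ℂ)*β^2 = 2*(a':ℂ)^2 := by
    rw [hβdef]
    calc 4*(r:ℂ)*((b:ℝ):ℂ)^2 = 2*(((b^2*(2*r) : ℝ)):ℂ) := by push_cast; ring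
    _ = 2*(a':ℂ)^2 := by rw [hb2]; push_cast; ring
  set s : ℂ := Complex.I * β with hsdef
  have hgs : s^4 + (-(2*((r:ℂ)-1)))*s^3 + (-(4*(r:ℂ)))*s^2 + (-(2*(a':ℂ)^2))
      = β^4 + 2*((r:ℂ)-1)*Complex.I*β^3 := by
    rw [hsdef]
    linear_combination (β^4*(Complex.I^2-1) - 2*((r:ℂ)-1)*β^3*Complex.I - 4*(r:ℂ)*β^2) * Complex.I_sq + hb2C
  have h2rb : 2*r*b^3 = a'^3/u := by
    rw [hbdef, div_pow, ← hu2]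
    field_simp
  have hau : a'^3/u ≤ 1/384 := by
    rw [div_le_div_iff₀ hu0 (by norm_num)]
    linarith
  have key : b^4 + 2*(r-1)*b^3 ≤ 1/256 := by
    have hb3 : (0:ℝ) ≤ b^3 := by positivity
    have h1 : b^4 ≤ (1/4)*b^3 := by nlinarith
    nlinarith
  obtain ⟨x, hxroot, hxnear⟩ :=
    quartic_root_near (-(2*((r:ℂ)-1))) (-(4*(r:ℂ))) (-(2*(a':ℂ)^2)) s
  rw [hgs] at hxnear
  have h256 : (‖(s-x)‖)^4 ≤ 1/256 := by
    refine hxnear.trans ?_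
    have e1 : (2*((r:ℂ)-1)) = (((2*(r-1)):ℝ):ℂ) := by push_cast; ring
    calc ‖(β^4 + 2*((r:ℂ)-1)*Complex.I*β^3)‖
        ≤ ‖(β^4)‖ + ‖(2*((r:ℂ)-1)*Complex.I*β^3)‖ := norm_add_le _ _
      _ = b^4 + 2*(r-1)*b^3 := by
          rw [norm_pow, hβabs, norm_mul, norm_mul, norm_pow, hβabs, Complex.norm_I, e1,
            Complex.norm_real, Real.norm_eq_abs, abs_of_nonneg (by linarith : (0:ℝ) ≤ 2*(r-1))]
          ring
      _ ≤ 1/256 := key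
  have hsx : ‖(s - x)‖ ≤ 1/4 := by
    by_contra hcon
    push_neg at hcon
    have h0 : ((1:ℝ)/4)^4 < ‖(s-x)‖^4 := by
      exact pow_lt_pow_left₀ hcon (by norm_num) (by norm_num)
    norm_num at h0
    linarith
  have hsabs : ‖s‖ = b := by rw [hsdef, norm_mul, Complex.norm_I, hβabs, one_mul]
  have hxhalf : ‖x‖ ≤ 1/2 := by
    calc ‖x‖ = ‖(s - (s - x))‖ := by congr 1; ring
      _ ≤ ‖s‖ + ‖(s - x)‖ := by
          simpa using norm_sub_le s (s - x)
      _ ≤ b + 1/4 := add_le_add (le_of_eq hsabs) hsx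
      _ ≤ 1/2 := by linarith
  have hg : x^4 - 2*((r:ℂ)-1)*x^3 - 4*(r:ℂ)*x^2 - 2*(a':ℂ)^2 = 0 := by
    linear_combination hxroot
  have hquad : ∀ z : ℂ, (z - Complex.I*β)*(z + Complex.I*β) = z^2 + β^2 := by
    intro z
    linear_combination (-β^2) * Complex.I_sq
  have hkey : ‖(x^2 + β^2)‖ ≤ (‖x‖)^3 := by
    have h4r : 4*(r:ℂ)*(x^2+β^2) = x^4 - 2*((r:ℂ)-1)*x^3 := by
      linear_combination (-1:ℂ)*hg + hb2C
    have habs4 : 4*r*‖(x^2+β^2)‖ = ‖(x^4 - 2*((r:ℂ)-1)*x^3)‖ := by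
      rw [← h4r, norm_mul]
      congr 1
      have e4 : (4*(r:ℂ)) = (((4*r):ℝ):ℂ) := by push_cast; ring
      rw [e4, Complex.norm_real, Real.norm_eq_abs, abs_of_pos (by linarith)]
    have e1 : (2*((r:ℂ)-1)) = (((2*(r-1)):ℝ):ℂ) := by push_cast; ring
    have e2 : ‖(2*((r:ℂ)-1)*x^3)‖ = 2*(r-1)*(‖x‖)^3 := by
      rw [e1, norm_mul, norm_pow, Complex.norm_real, Real.norm_eq_abs,
        abs_of_nonneg (by linarith : (0:ℝ) ≤ 2*(r-1))]
    have e3 : ‖(x^4)‖ = (‖x‖)^4 := norm_pow _ _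
    have htri : ‖(x^4 - 2*((r:ℂ)-1)*x^3)‖ ≤
        (‖x‖)^4 + 2*(r-1)*(‖x‖)^3 := by
      rw [← e2, ← e3]
      exact norm_sub_le (x^4) (2*((r:ℂ)-1)*x^3)
    have hxn : (0:ℝ) ≤ ‖x‖ := norm_nonneg x
    have hx4 : (‖x‖)^4 ≤ (1/2)*(‖x‖)^3 := by
      nlinarith [mul_le_mul_of_nonneg_left hxhalf (pow_nonneg hxn 3)]
    have hrm : 2*(‖x‖)^3 ≤ r*(‖x‖)^3 :=
      mul_le_mul_of_nonneg_right hr2 (pow_nonneg hxn 3)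
    have h5 : 4*r*‖(x^2+β^2)‖ ≤ 4*r*(‖x‖)^3 := by
      linarith [pow_nonneg hxn 3]
    exact le_of_mul_le_mul_left h5 (by positivity)
  have hxb : ‖x‖ ≤ 2*b := by
    set m := ‖x‖ with hm
    have hmn : (0:ℝ) ≤ m := norm_nonneg x
    have hm2 : m^2 ≤ m^3 + b^2 := by
      have e1 : ‖(x^2)‖ = m^2 := by rw [norm_pow]
      have e2 : ‖(β^2)‖ = b^2 := by rw [norm_pow, hβabs]
      have h6 : ‖(x^2)‖ ≤ ‖(x^2+β^2)‖ + ‖(β^2)‖ := by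
        calc ‖(x^2)‖ = ‖((x^2+β^2) - β^2)‖ := by congr 1; ring
          _ ≤ ‖(x^2+β^2)‖ + ‖(β^2)‖ := by
              exact norm_sub_le (x^2+β^2) (β^2)
      rw [e1, e2] at h6
      linarith [hkey]
    have hm3 : m^3 ≤ (1/2)*m^2 := by
      nlinarith [mul_le_mul_of_nonneg_left hxhalf (sq_nonneg m)]
    have hsq : m^2 ≤ (2*b)^2 := by nlinarith
    exact (pow_le_pow_iff_left₀ hmn (by linarith) (by norm_num)).mp hsq
  have hprod : ‖(x - Complex.I*β)‖ * ‖(x + Complex.I*β)‖ ≤ 8*b^3 := by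
    rw [← norm_mul, hquad x]
    refine hkey.trans ?_
    calc (‖x‖)^3 ≤ (2*b)^3 :=
        pow_le_pow_left₀ (norm_nonneg x) hxb 3
      _ = 8*b^3 := by ring
  have hsum : 2*b ≤ ‖(x - Complex.I*β)‖ + ‖(x + Complex.I*β)‖ := by
    have e0 : ‖((x + Complex.I*β) - (x - Complex.I*β))‖ = 2*b := by
      have e : (x + Complex.I*β) - (x - Complex.I*β) = ((2:ℝ):ℂ)*(Complex.I*β) := by push_cast; ring
      rw [e, norm_mul, norm_mul, Complex.norm_real, Real.norm_eq_abs, Complex.norm_I, hβabs]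
      norm_num
    calc 2*b = ‖((x + Complex.I*β) - (x - Complex.I*β))‖ := e0.symm
      _ ≤ ‖(x + Complex.I*β)‖ + ‖(x - Complex.I*β)‖ := by
          simpa using norm_sub_le (x + Complex.I*β) (x - Complex.I*β)
      _ = _ := by ring
  have h8b : (8:ℝ)*b^2 = 4*a'^2/r := by
    rw [eq_div_iff hr0.ne']
    nlinarith
  have hgc : (starRingEnd ℂ x)^4 - 2*((r:ℂ)-1)*(starRingEnd ℂ x)^3
      - 4*(r:ℂ)*(starRingEnd ℂ x)^2 - 2*(a':ℂ)^2 = 0 := by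
    have h7 := congrArg (starRingEnd ℂ) hg
    simpa [map_sub, map_mul, map_pow, map_ofNat, map_one, Complex.conj_ofReal] using h7
  obtain ⟨σ, hgσ, hσnear⟩ : ∃ σ : ℂ,
      (σ^4 - 2*((r:ℂ)-1)*σ^3 - 4*(r:ℂ)*σ^2 - 2*(a':ℂ)^2 = 0) ∧
      ‖(σ - Complex.I*β)‖ ≤ 4*a'^2/r := by
    rcases le_total (‖(x - Complex.I*β)‖) (‖(x + Complex.I*β)‖) with h | h
    · refine ⟨x, hg, ?_⟩
      have hbig : b ≤ ‖(x + Complex.I*β)‖ := by linarith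
      have h9 : ‖(x - Complex.I*β)‖ * b ≤ (8*b^2) * b := by
        have := mul_le_mul_of_nonneg_left hbig (norm_nonneg (x - Complex.I*β))
        nlinarith [hprod]
      have := le_of_mul_le_mul_right h9 hb0
      linarith [h8b]
    · refine ⟨starRingEnd ℂ x, hgc, ?_⟩
      have econj : ‖(starRingEnd ℂ x - Complex.I*β)‖
          = ‖(x + Complex.I*β)‖ := by
        rw [← Complex.norm_conj (x + Complex.I*β)]
        congr 1
        simp [map_add, map_mul, Complex.conj_I, hβdef, Complex.conj_ofReal]
        ring
      rw [econj]
      have hbig : b ≤ ‖(x - Complex.I*β)‖ := by linarith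
      have h9 : ‖(x + Complex.I*β)‖ * b ≤ (8*b^2) * b := by
        have := mul_le_mul_of_nonneg_left hbig (norm_nonneg (x + Complex.I*β))
        nlinarith [hprod]
      have := le_of_mul_le_mul_right h9 hb0
      linarith [h8b]
  refine ⟨σ, ?_, ?_, hσnear, ?_, ?_⟩
  · field_simp
    linear_combination -hgσ
  · have hgσc : (starRingEnd ℂ σ)^4 - 2*((r:ℂ)-1)*(starRingEnd ℂ σ)^3
        - 4*(r:ℂ)*(starRingEnd ℂ σ)^2 - 2*(a':ℂ)^2 = 0 := by
      have h7 := congrArg (starRingEnd ℂ) hgσ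
      simpa [map_sub, map_mul, map_pow, map_ofNat, map_one, Complex.conj_ofReal] using h7
    field_simp
    linear_combination -hgσc
  · linear_combination ((r:ℂ)^4) * hgσ
  · have hsr : Real.sqrt (2*r) = Real.sqrt 2 * Real.sqrt r := Real.sqrt_mul (by norm_num) r
    have hsrr : Real.sqrt r ^ 2 = r := Real.sq_sqrt hr0.le
    have hs2 : Real.sqrt 2 ≠ 0 := by positivity
    have hsr0 : Real.sqrt r ≠ 0 := by positivity
    have hcb : a'/Real.sqrt 2 * Real.sqrt r = r * b := by
      rw [hbdef, hudef, hsr]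
      field_simp
      linear_combination hsrr
    have e : (r:ℂ)*(1+σ) - ((r:ℂ) + Complex.I*(((a'/Real.sqrt 2 * Real.sqrt r : ℝ)):ℂ))
        = (r:ℂ)*(σ - Complex.I*β) := by
      rw [hcb, hβdef]
      push_cast
      ring
    rw [e, norm_mul, Complex.norm_real, Real.norm_eq_abs, abs_of_pos hr0]
    calc r * ‖(σ - Complex.I*β)‖ ≤ r * (4*a'^2/r) :=
        mul_le_mul_of_nonneg_left hσnear hr0.le
      _ = 4*a'^2 := by field_simp
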